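/- Let Q(v)(s,a) = R(s,a) + γ inf_{u∈U_{(s,a)}} Σ_{s'} u(s') v(s'). Setting b = (1/(1−γ)) min_s (B(x)−x)(s) and c = (1/(1−γ)) max_s (B(x)−x)(s), we have x + b·1 ≤ v* ≤ x + c·1, where v* is the unique fixed point of B. Consequently, if Q(x)(s,a) < B(x)(s) − (γ/(1−γ))·span(B(x) − x) with span(y) = max_s y(s) − min_s y(s), then action a is suboptimal at s (i.e., Q(v*)(s,a) < v*(s)). -/

import Mathlib

open Finset

def IsDist {S : Type*} [Fintype S] (u : S → ℝ) : Prop :=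
  (∀ s, 0 ≤ u s) ∧ ∑ s, u s = 1

noncomputable def bellman {S A : Type*} [Fintype S] [Fintype A] [Nonempty A]
    (γ : ℝ) (R : S → A → ℝ) (U : S → A → Set (S → ℝ)) (v : S → ℝ) : S → ℝ :=
  fun s => Finset.univ.sup' Finset.univ_nonempty fun a =>
    R s a + γ * sInf ((fun u => ∑ s', u s' * v s') '' U s a)

noncomputable def Qval {S A : Type*} [Fintype S] [Fintype A]
    (γ : ℝ) (R : S → A → ℝ) (U : S → A → Set (S → ℝ)) (v : S → ℝ) (s : S) (a : A) : ℝ :=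
  R s a + γ * sInf ((fun u => ∑ s', u s' * v s') '' U s a)

lemma sInf_image_add (s : Set ℝ) (hs : s.Nonempty) (hb : BddBelow s) (c : ℝ) :
    sInf ((fun x => x + c) '' s) = sInf s + c := by
  apply le_antisymm
  · have h : sInf ((fun x => x + c) '' s) - c ≤ sInf s := by
      apply le_csInf hs
      intro x hx
      have : sInf ((fun x => x + c) '' s) ≤ x + c := by
        apply csInf_le
        · obtain ⟨l, hl⟩ := hb
          exact ⟨l + c, by rintro y ⟨z, hz, rfl⟩; exact add_le_add_left (hl hz) c⟩
        · exact ⟨x, hx, rfl⟩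
      linarith
    linarith
  · apply le_csInf (hs.image _)
    rintro y ⟨z, hz, rfl⟩
    exact add_le_add_left (csInf_le hb hz) c

section Aux
variable {S A : Type*} [Fintype S] [Fintype A] [Nonempty S] [Nonempty A]

lemma img_bddBelow (U : Set (S → ℝ)) (hU : ∀ u ∈ U, IsDist u) (v : S → ℝ) :
    BddBelow ((fun u => ∑ s', u s' * v s') '' U) := by
  refine ⟨Finset.univ.inf' Finset.univ_nonempty v, ?_⟩
  rintro y ⟨u, hu, rfl⟩
  obtain ⟨hpos, hsum⟩ := hU u hu
  calc Finset.univ.inf' Finset.univ_nonempty v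
      = ∑ s', u s' * Finset.univ.inf' Finset.univ_nonempty v := by
        rw [← Finset.sum_mul, hsum, one_mul]
    _ ≤ ∑ s', u s' * v s' := by
        apply Finset.sum_le_sum; intro i _
        exact mul_le_mul_of_nonneg_left (Finset.inf'_le _ (mem_univ i)) (hpos i)

lemma img_sInf_mono (U : Set (S → ℝ)) (hne : U.Nonempty) (hU : ∀ u ∈ U, IsDist u)
    {v w : S → ℝ} (h : ∀ s, v s ≤ w s) :
    sInf ((fun u => ∑ s', u s' * v s') '' U) ≤ sInf ((fun u => ∑ s', u s' * w s') '' U) := by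
  apply le_csInf (hne.image _)
  rintro y ⟨u, hu, rfl⟩
  calc sInf ((fun u => ∑ s', u s' * v s') '' U) ≤ ∑ s', u s' * v s' :=
        csInf_le (img_bddBelow U hU v) ⟨u, hu, rfl⟩
    _ ≤ ∑ s', u s' * w s' := by
        apply Finset.sum_le_sum; intro i _
        exact mul_le_mul_of_nonneg_left (h i) ((hU u hu).1 i)

lemma img_sInf_shift (U : Set (S → ℝ)) (hne : U.Nonempty) (hU : ∀ u ∈ U, IsDist u)
    (v : S → ℝ) (c : ℝ) :
    sInf ((fun u => ∑ s', u s' * (v s' + c)) '' U)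
      = sInf ((fun u => ∑ s', u s' * v s') '' U) + c := by
  have himg : (fun u : S → ℝ => ∑ s', u s' * (v s' + c)) '' U
      = (fun x => x + c) '' ((fun u => ∑ s', u s' * v s') '' U) := by
    rw [← Set.image_comp]
    apply Set.image_congr
    intro u hu
    simp only [Function.comp]
    have hsum := (hU u hu).2
    simp only [mul_add, Finset.sum_add_distrib, ← Finset.sum_mul, hsum, one_mul]
  rw [himg, sInf_image_add _ (hne.image _) (img_bddBelow U hU v)]

lemma Qval_mono (γ : ℝ) (hγ0 : 0 ≤ γ) (R : S → A → ℝ) (U : S → A → Set (S → ℝ))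
    (hUne : ∀ s a, (U s a).Nonempty) (hUdist : ∀ s a, ∀ u ∈ U s a, IsDist u)
    {v w : S → ℝ} (h : ∀ s, v s ≤ w s) (s : S) (a : A) :
    Qval γ R U v s a ≤ Qval γ R U w s a := by
  unfold Qval
  have := img_sInf_mono (U s a) (hUne s a) (hUdist s a) h
  nlinarith

lemma Qval_shift (γ : ℝ) (R : S → A → ℝ) (U : S → A → Set (S → ℝ))
    (hUne : ∀ s a, (U s a).Nonempty) (hUdist : ∀ s a, ∀ u ∈ U s a, IsDist u)
    (v : S → ℝ) (c : ℝ) (s : S) (a : A) :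
    Qval γ R U (fun s' => v s' + c) s a = Qval γ R U v s a + γ * c := by
  unfold Qval
  rw [img_sInf_shift (U s a) (hUne s a) (hUdist s a) v c]
  ring

lemma bellman_eq_sup (γ : ℝ) (R : S → A → ℝ) (U : S → A → Set (S → ℝ)) (v : S → ℝ) (s : S) :
    bellman γ R U v s = Finset.univ.sup' Finset.univ_nonempty (fun a => Qval γ R U v s a) := rfl

lemma bellman_mono (γ : ℝ) (hγ0 : 0 ≤ γ) (R : S → A → ℝ) (U : S → A → Set (S → ℝ))
    (hUne : ∀ s a, (U s a).Nonempty) (hUdist : ∀ s a, ∀ u ∈ U s a, IsDist u)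
    {v w : S → ℝ} (h : ∀ s, v s ≤ w s) (s : S) :
    bellman γ R U v s ≤ bellman γ R U w s := by
  rw [bellman_eq_sup, bellman_eq_sup]
  apply Finset.sup'_le
  intro a _
  exact le_trans (Qval_mono γ hγ0 R U hUne hUdist h s a)
    (Finset.le_sup' (fun a => Qval γ R U w s a) (mem_univ a))

lemma bellman_shift (γ : ℝ) (R : S → A → ℝ) (U : S → A → Set (S → ℝ))
    (hUne : ∀ s a, (U s a).Nonempty) (hUdist : ∀ s a, ∀ u ∈ U s a, IsDist u)
    (v : S → ℝ) (c : ℝ) (s : S) :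
    bellman γ R U (fun s' => v s' + c) s = bellman γ R U v s + γ * c := by
  rw [bellman_eq_sup, bellman_eq_sup]
  have hfa : (fun a => Qval γ R U (fun s' => v s' + c) s a)
      = fun a => Qval γ R U v s a + γ * c := by
    funext a; exact Qval_shift γ R U hUne hUdist v c s a
  rw [hfa]
  apply le_antisymm
  · apply Finset.sup'_le; intro a _
    exact add_le_add_left (Finset.le_sup' (fun a => Qval γ R U v s a) (mem_univ a)) _
  · obtain ⟨a, _, ha⟩ := Finset.exists_mem_eq_sup' (Finset.univ_nonempty (α := A))
      (fun a => Qval γ R U v s a)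
    rw [ha]
    exact Finset.le_sup' (f := fun a => Qval γ R U v s a + γ * c) (mem_univ a)

lemma vstar_ge (γ : ℝ) (hγ : γ ∈ Set.Ioo (0:ℝ) 1) (R : S → A → ℝ) (U : S → A → Set (S → ℝ))
    (hUne : ∀ s a, (U s a).Nonempty) (hUdist : ∀ s a, ∀ u ∈ U s a, IsDist u)
    (vstar : S → ℝ) (hfix : bellman γ R U vstar = vstar)
    (w : S → ℝ) (hw : ∀ s, w s ≤ bellman γ R U w s) : ∀ s, w s ≤ vstar s := by
  set m := Finset.univ.inf' Finset.univ_nonempty (fun s => vstar s - w s) with hm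
  have hle : ∀ s, w s ≤ vstar s + (-m) := by
    intro s
    have := Finset.inf'_le (fun s => vstar s - w s) (mem_univ s)
    rw [← hm] at this; linarith
  have key : ∀ s, γ * m ≤ vstar s - w s := by
    intro s
    have h1 : bellman γ R U w s ≤ bellman γ R U (fun s' => vstar s' + (-m)) s :=
      bellman_mono γ hγ.1.le R U hUne hUdist hle s
    have h2 : bellman γ R U (fun s' => vstar s' + (-m)) s = vstar s + γ * (-m) := by
      rw [bellman_shift γ R U hUne hUdist vstar (-m) s, hfix]
    have := hw s
    rw [h2] at h1; linarith
  obtain ⟨s₀, _, hs₀⟩ := Finset.exists_mem_eq_inf' (Finset.univ_nonempty (α := S))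
      (fun s => vstar s - w s)
  rw [← hm] at hs₀
  have hmm : γ * m ≤ m := by linarith [key s₀, hs₀.le, hs₀.ge]
  have hm0 : 0 ≤ m := by nlinarith [hγ.1, hγ.2]
  intro s
  have := Finset.inf'_le (fun s => vstar s - w s) (mem_univ s)
  rw [← hm] at this; linarith

lemma vstar_le (γ : ℝ) (hγ : γ ∈ Set.Ioo (0:ℝ) 1) (R : S → A → ℝ) (U : S → A → Set (S → ℝ))
    (hUne : ∀ s a, (U s a).Nonempty) (hUdist : ∀ s a, ∀ u ∈ U s a, IsDist u)
    (vstar : S → ℝ) (hfix : bellman γ R U vstar = vstar)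
    (w : S → ℝ) (hw : ∀ s, bellman γ R U w s ≤ w s) : ∀ s, vstar s ≤ w s := by
  set M := Finset.univ.sup' Finset.univ_nonempty (fun s => vstar s - w s) with hM
  have hle : ∀ s, vstar s ≤ w s + M := by
    intro s
    have := Finset.le_sup' (fun s => vstar s - w s) (mem_univ s)
    rw [← hM] at this; linarith
  have key : ∀ s, vstar s - w s ≤ γ * M := by
    intro s
    have h1 : bellman γ R U vstar s ≤ bellman γ R U (fun s' => w s' + M) s :=
      bellman_mono γ hγ.1.le R U hUne hUdist hle s
    have h2 : bellman γ R U (fun s' => w s' + M) s = bellman γ R U w s + γ * M :=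
      bellman_shift γ R U hUne hUdist w M s
    have h3 : bellman γ R U vstar s = vstar s := by rw [hfix]
    have := hw s
    rw [h2, h3] at h1; linarith
  obtain ⟨s₀, _, hs₀⟩ := Finset.exists_mem_eq_sup' (Finset.univ_nonempty (α := S))
      (fun s => vstar s - w s)
  rw [← hM] at hs₀
  have hmm : M ≤ γ * M := by linarith [key s₀, hs₀.le, hs₀.ge]
  have hM0 : M ≤ 0 := by nlinarith [hγ.1, hγ.2]
  intro s
  have := Finset.le_sup' (fun s => vstar s - w s) (mem_univ s)
  rw [← hM] at this; linarith

end Aux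

theorem suboptimality_span {S A : Type*} [Fintype S] [Fintype A] [Nonempty S] [Nonempty A]
    (γ : ℝ) (hγ : γ ∈ Set.Ioo (0 : ℝ) 1)
    (R : S → A → ℝ) (U : S → A → Set (S → ℝ))
    (hUne : ∀ s a, (U s a).Nonempty)
    (hUcomp : ∀ s a, IsCompact (U s a))
    (hUdist : ∀ s a, ∀ u ∈ U s a, IsDist u)
    (vstar : S → ℝ) (hfix : bellman γ R U vstar = vstar)
    (huniq : ∀ w : S → ℝ, bellman γ R U w = w → w = vstar)
    (x : S → ℝ) :
    (∀ s, x s + (1 - γ)⁻¹ * (Finset.univ.inf' Finset.univ_nonempty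
        (fun s' => bellman γ R U x s' - x s')) ≤ vstar s ∧
      vstar s ≤ x s + (1 - γ)⁻¹ * (Finset.univ.sup' Finset.univ_nonempty
        (fun s' => bellman γ R U x s' - x s'))) ∧
    (∀ s a, Qval γ R U x s a < bellman γ R U x s - γ / (1 - γ) *
        ((Finset.univ.sup' Finset.univ_nonempty (fun s' => bellman γ R U x s' - x s')) -
         (Finset.univ.inf' Finset.univ_nonempty (fun s' => bellman γ R U x s' - x s'))) →
      Qval γ R U vstar s a < vstar s) := by
  obtain ⟨hγ0, hγ1⟩ := hγ
  have hγ' : γ ∈ Set.Ioo (0:ℝ) 1 := ⟨hγ0, hγ1⟩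
  have h1γ : (0:ℝ) < 1 - γ := by linarith
  set m := Finset.univ.inf' Finset.univ_nonempty (fun s' => bellman γ R U x s' - x s') with hm
  set M := Finset.univ.sup' Finset.univ_nonempty (fun s' => bellman γ R U x s' - x s') with hM
  set b := (1 - γ)⁻¹ * m with hb
  set c := (1 - γ)⁻¹ * M with hc
  have hlow : ∀ s, x s + b ≤ vstar s := by
    apply vstar_ge γ hγ' R U hUne hUdist vstar hfix
    intro s
    rw [bellman_shift γ R U hUne hUdist x b s]
    have hms : m ≤ bellman γ R U x s - x s := by
      have := Finset.inf'_le (fun s' => bellman γ R U x s' - x s') (mem_univ s)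
      rw [← hm] at this; exact this
    have hbeq : b = m + γ * b := by rw [hb]; field_simp; ring
    linarith
  have hhigh : ∀ s, vstar s ≤ x s + c := by
    apply vstar_le γ hγ' R U hUne hUdist vstar hfix
    intro s
    rw [bellman_shift γ R U hUne hUdist x c s]
    have hMs : bellman γ R U x s - x s ≤ M := by
      have := Finset.le_sup' (fun s' => bellman γ R U x s' - x s') (mem_univ s)
      rw [← hM] at this; exact this
    have hceq : c = M + γ * c := by rw [hc]; field_simp; ring
    linarith
  refine ⟨fun s => ⟨hlow s, hhigh s⟩, ?_⟩
  intro s a hQ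
  have h1 : Qval γ R U vstar s a ≤ Qval γ R U (fun s' => x s' + c) s a :=
    Qval_mono γ hγ0.le R U hUne hUdist hhigh s a
  have h2 : Qval γ R U (fun s' => x s' + c) s a = Qval γ R U x s a + γ * c :=
    Qval_shift γ R U hUne hUdist x c s a
  have h3 : bellman γ R U (fun s' => x s' + b) s = bellman γ R U x s + γ * b :=
    bellman_shift γ R U hUne hUdist x b s
  have h4 : bellman γ R U (fun s' => x s' + b) s ≤ bellman γ R U vstar s :=
    bellman_mono γ hγ0.le R U hUne hUdist hlow s
  have h5 : bellman γ R U vstar s = vstar s := by rw [hfix]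
  have hcb : γ * c - γ * b = γ / (1 - γ) * (M - m) := by
    rw [hc, hb]; field_simp
  linarith
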